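/- Let C be a Barr-exact Mal'tsev category, E its regular epimorphisms, and X a Birkhoff subcategory of C (full reflective subcategory closed under subobjects and regular quotients). Then X is strongly E-Birkhoff: for every regular epimorphism f : A → B, the naturality square with legs η_A : A → HI(A), η_B : B → HI(B), f, and HI(f) is a double extension. -/

import Mathlib

open CategoryTheory CategoryTheory.Limits

universe v u v' u'

namespace GaloisPaper

variable {C : Type u} [Category.{v} C]

/-- The class `E¹` of "double extensions" relative to a class `F` of morphisms:
a commutative square (i.e. a morphism `σ : a ⟶ b` of the arrow category) with all
four arrows in `F`, such that the comparison morphism to the pullback lies in `F`. -/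
def InE1 (F : MorphismProperty C) : MorphismProperty (Arrow C) := fun a b σ =>
  F a.hom ∧ F b.hom ∧ F σ.left ∧ F σ.right ∧
    ∃ (P : C) (p₁ : P ⟶ a.right) (p₂ : P ⟶ b.left) (l : a.left ⟶ P),
      IsPullback p₁ p₂ σ.right b.hom ∧ l ≫ p₁ = a.hom ∧ l ≫ p₂ = σ.left ∧ F l

/-- (E1): `F` contains all isomorphisms (between objects satisfying `O`). -/
def CondE1 (O : C → Prop) (F : MorphismProperty C) : Prop :=
  ∀ ⦃a b : C⦄ (σ : a ⟶ b), O a → O b → IsIso σ → F σ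

/-- (E2): `F` is pullback-stable: pullbacks of morphisms of `F` along arbitrary
morphisms (between objects satisfying `O`) exist and lie in `F`. -/
def CondE2 (O : C → Prop) (F : MorphismProperty C) : Prop :=
  ∀ ⦃a b : C⦄ (σ : a ⟶ b), F σ → ∀ ⦃c : C⦄ (g : c ⟶ b), O c →
    (∃ (d : C) (q₁ : d ⟶ a) (q₂ : d ⟶ c), O d ∧ IsPullback q₁ q₂ σ g ∧ F q₂) ∧
    (∀ ⦃d : C⦄ (q₁ : d ⟶ a) (q₂ : d ⟶ c), O d → IsPullback q₁ q₂ σ g → F q₂)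

/-- (E3): `F` is closed under composition. -/
def CondE3 (F : MorphismProperty C) : Prop :=
  ∀ ⦃a b c : C⦄ (σ : a ⟶ b) (τ : b ⟶ c), F σ → F τ → F (σ ≫ τ)

/-- (E4): if `σ ≫ τ ∈ F` then `τ ∈ F`. -/
def CondE4 (O : C → Prop) (F : MorphismProperty C) : Prop :=
  ∀ ⦃a b c : C⦄ (σ : a ⟶ b) (τ : b ⟶ c), O a → O b → O c → F (σ ≫ τ) → F τ

/-- (E5): every split epimorphism of `Ext(C)` (i.e. every morphism of the arrow
category between `F`-arrows admitting a section) lies in `F¹`. -/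
def CondE5 (F : MorphismProperty C) : Prop :=
  ∀ ⦃a b : Arrow C⦄ (σ : a ⟶ b) (τ : b ⟶ a), τ ≫ σ = 𝟙 b → F a.hom → F b.hom → InE1 F σ

/-- `(C ↓ B)`: the full subcategory of `Over B` on morphisms in `F`. -/
def EOver (F : MorphismProperty C) (B : C) :=
  ObjectProperty.FullSubcategory (fun f : Over B => F f.hom)

instance (F : MorphismProperty C) (B : C) : Category (EOver F B) :=
  ObjectProperty.FullSubcategory.category _

/-- `Σ_p`: composition with `p`, as a functor `(C ↓ A) ⥤ (C ↓ B)`. -/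
def eMap (F : MorphismProperty C) {A B : C} (p : A ⟶ B)
    (hcomp : ∀ ⦃Z : C⦄ (f : Z ⟶ A), F f → F (f ≫ p)) : EOver F A ⥤ EOver F B :=
  ObjectProperty.lift _ (ObjectProperty.ι (fun f : Over A => F f.hom) ⋙ Over.map p)
    (fun f => hcomp f.obj.hom f.property)

/-- `p` is a monadic extension (effective `F`-descent morphism): `p ∈ F` and the
pullback functor `p* : (C ↓ B) ⥤ (C ↓ A)` (i.e. the right adjoint of `Σ_p`) is monadic. -/
def IsMonadicExt (F : MorphismProperty C) {A B : C} (p : A ⟶ B) : Prop :=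
  F p ∧ ∃ (hcomp : ∀ ⦃Z : C⦄ (f : Z ⟶ A), F f → F (f ≫ p))
    (G : EOver F B ⥤ EOver F A) (_ : eMap F p hcomp ⊣ G),
    Nonempty (MonadicRightAdjoint G)

/-- `u : e ⟶ r` exhibits `r` as a reflection of `e` into the full subcategory
determined by `P`. -/
def IsReflectionInto {D : Type u'} [Category.{v'} D] (P : D → Prop) {e r : D}
    (u : e ⟶ r) : Prop :=
  P r ∧ ∀ ⦃a : D⦄, P a → ∀ k : e ⟶ a, ∃! m : r ⟶ a, u ≫ m = k

/-- A Galois structure `(C, X, H, I, η, E)` as in Janelidze–Kelly: a full replete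
reflective subcategory together with a class `E` satisfying (E1)–(E3) and (G). -/
structure GaloisStructure (C : Type u) [Category.{v} C] (X : Type u') [Category.{v'} X] where
  H : X ⥤ C
  I : C ⥤ X
  adj : I ⊣ H
  hFull : H.Full
  hFaithful : H.Faithful
  E : MorphismProperty C
  hE1 : CondE1 (fun _ => True) E
  hE2 : CondE2 (fun _ => True) E
  hE3 : CondE3 E
  hG : ∀ ⦃A B : C⦄ (f : A ⟶ B), E f → E (H.map (I.map f))

namespace GaloisStructure

variable {X : Type u'} [Category.{v'} X] (Γ : GaloisStructure C X)

/-- The component `η_A : A ⟶ HI(A)` of the reflection unit. -/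
def unitApp (A : C) : A ⟶ Γ.H.obj (Γ.I.obj A) := Γ.adj.unit.app A

/-- A trivial covering: `f ∈ E` whose `η`-naturality square is a pullback. -/
def TrivCov {A B : C} (f : A ⟶ B) : Prop :=
  Γ.E f ∧ IsPullback (Γ.unitApp A) f (Γ.H.map (Γ.I.map f)) (Γ.unitApp B)

/-- `f` is split by `p`: the pullback `p*(f)` of `f` along `p` is a trivial covering. -/
def IsSplitBy {A B E' : C} (f : A ⟶ B) (p : E' ⟶ B) : Prop :=
  ∀ ⦃P : C⦄ (p₁ : P ⟶ A) (p₂ : P ⟶ E'), IsPullback p₁ p₂ f p → Γ.TrivCov p₂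

/-- A covering (central extension): a morphism of `E` split by some monadic extension. -/
def Covering {A B : C} (f : A ⟶ B) : Prop :=
  Γ.E f ∧ ∃ (E' : C) (p : E' ⟶ B), IsMonadicExt Γ.E p ∧ Γ.IsSplitBy f p

/-- A normal extension: a monadic extension split by itself. -/
def NormalExt {A B : C} (p : A ⟶ B) : Prop :=
  IsMonadicExt Γ.E p ∧ Γ.IsSplitBy p p

/-- (M): every morphism of `E` is a monadic extension. -/
def CondM : Prop := ∀ ⦃A B : C⦄ (p : A ⟶ B), Γ.E p → IsMonadicExt Γ.E p

/-- Admissibility of the Galois structure: the right adjoints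
`H^B : (X ↓ I(B)) ⥤ (C ↓ B)` are fully faithful.  Equivalently (and this is how we
state it), for every `φ : x ⟶ I(B)` with `H(φ) ∈ E` and every pullback of `H(φ)`
along `η_B`, the corresponding component of the counit of `I^B ⊣ H^B`, i.e. the
adjoint transpose `I(A) ⟶ x` of `t : A ⟶ H(x)`, is an isomorphism. -/
def Admissible : Prop :=
  ∀ ⦃B : C⦄ ⦃x : X⦄ (φ : x ⟶ Γ.I.obj B), Γ.E (Γ.H.map φ) →
    ∀ ⦃A : C⦄ (t : A ⟶ Γ.H.obj x) (f : A ⟶ B),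
      IsPullback t f (Γ.H.map φ) (Γ.unitApp B) →
      IsIso ((Γ.adj.homEquiv A x).symm t)

/-- The `η`-naturality square at `f`, as a morphism of the arrow category. -/
def unitSq {A B : C} (f : A ⟶ B) : Arrow.mk f ⟶ Arrow.mk (Γ.H.map (Γ.I.map f)) :=
  Arrow.homMk (u := Γ.unitApp A) (v := Γ.unitApp B)
    (by simp [unitApp])

/-- (B): `X` is a strongly `E`-Birkhoff subcategory of `C`: every `η`-naturality
square at a morphism of `E` lies in `E¹`. -/
def StronglyBirkhoff : Prop :=
  ∀ ⦃A B : C⦄ (f : A ⟶ B), Γ.E f → InE1 Γ.E (Γ.unitSq f)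

/-- `I` preserves pullbacks of morphisms of `E` along split epimorphisms of `E`. -/
def PreservesSplitPullbacks : Prop :=
  ∀ ⦃D' A B C' : C⦄ (t : D' ⟶ A) (h : D' ⟶ C') (f : A ⟶ B) (g : C' ⟶ B),
    IsPullback t h f g → Γ.E f → Γ.E g → IsSplitEpi g →
    IsPullback (Γ.I.map t) (Γ.I.map h) (Γ.I.map f) (Γ.I.map g)

end GaloisStructure

/-- The class of regular epimorphisms. -/
def regEpi (C : Type u) [Category.{v} C] : MorphismProperty C :=
  fun _ _ f => Nonempty (RegularEpi f)

/-- A pair of parallel morphisms is jointly monic. -/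
def JointlyMono {R A : C} (d₀ d₁ : R ⟶ A) : Prop :=
  ∀ ⦃T : C⦄ (x y : T ⟶ R), x ≫ d₀ = y ≫ d₀ → x ≫ d₁ = y ≫ d₁ → x = y

/-- An internal reflexive relation (given by its jointly monic pair of projections). -/
def IsReflexiveRel {R A : C} (d₀ d₁ : R ⟶ A) : Prop :=
  JointlyMono d₀ d₁ ∧ ∃ r : A ⟶ R, r ≫ d₀ = 𝟙 A ∧ r ≫ d₁ = 𝟙 A

/-- An internal equivalence relation. -/
def IsEquivRel {R A : C} (d₀ d₁ : R ⟶ A) : Prop :=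
  IsReflexiveRel d₀ d₁ ∧ (∃ s : R ⟶ R, s ≫ d₀ = d₁ ∧ s ≫ d₁ = d₀) ∧
    ∀ ⦃T : C⦄ (x y : T ⟶ R), x ≫ d₁ = y ≫ d₀ →
      ∃ t : T ⟶ R, t ≫ d₀ = x ≫ d₀ ∧ t ≫ d₁ = y ≫ d₁

/-- A Mal'tsev category: every internal reflexive relation is an equivalence relation. -/
def IsMaltsevCat (C : Type u) [Category.{v} C] : Prop :=
  ∀ ⦃A R : C⦄ (d₀ d₁ : R ⟶ A), IsReflexiveRel d₀ d₁ → IsEquivRel d₀ d₁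

/-- A regular category: finite limits (assumed separately), regular epi–mono
factorisations, and pullback-stability of regular epimorphisms. -/
structure IsRegularCategory (C : Type u) [Category.{v} C] : Prop where
  factor : ∀ ⦃A B : C⦄ (f : A ⟶ B), ∃ (I' : C) (e : A ⟶ I') (m : I' ⟶ B),
    f = e ≫ m ∧ Nonempty (RegularEpi e) ∧ Mono m
  stable : ∀ ⦃P' X' Y' Z' : C⦄ (p₁ : P' ⟶ X') (p₂ : P' ⟶ Y') (f : X' ⟶ Z') (g : Y' ⟶ Z'),
    IsPullback p₁ p₂ f g → Nonempty (RegularEpi f) → Nonempty (RegularEpi p₂)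

/-- A Barr-exact category: regular, and every internal equivalence relation is
effective (i.e. a kernel pair). -/
def IsBarrExact (C : Type u) [Category.{v} C] : Prop :=
  IsRegularCategory C ∧ ∀ ⦃A R : C⦄ (d₀ d₁ : R ⟶ A), IsEquivRel d₀ d₁ →
    ∃ (Q : C) (q : A ⟶ Q), IsPullback d₀ d₁ q q

/-- A Birkhoff subcategory: a full reflective subcategory closed under subobjects
and regular quotient objects. -/
structure IsBirkhoff {X : Type u'} [Category.{v'} X] (H : X ⥤ C) (I : C ⥤ X)
    (adj : I ⊣ H) : Prop where
  full : H.Full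
  faithful : H.Faithful
  closedSub : ∀ (x : X) (A : C) (m : A ⟶ H.obj x), Mono m → ∃ y : X, Nonempty (A ≅ H.obj y)
  closedQuot : ∀ (x : X) (A : C) (e : H.obj x ⟶ A), Nonempty (RegularEpi e) →
    ∃ y : X, Nonempty (A ≅ H.obj y)

/-- The category `Ext(C)` of `F`-morphisms. -/
def ExtCat (F : MorphismProperty C) := ObjectProperty.FullSubcategory (fun a : Arrow C => F a.hom)

instance (F : MorphismProperty C) : Category (ExtCat F) := ObjectProperty.FullSubcategory.category _

/-- The restriction of `F¹` to the category `Ext(C)`. -/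
def ExtE1 (F : MorphismProperty C) : MorphismProperty (ExtCat F) :=
  fun _ _ σ => InE1 F ((ObjectProperty.ι (fun a : Arrow C => F a.hom)).map σ)



section AuxiliaryLemmas

variable {D : Type u} [Category.{v} D]

/-- In a regular category, every strong epimorphism is a regular epimorphism. -/
lemma nregEpi_of_strongEpi (hreg : IsRegularCategory D) {A B : D} (f : A ⟶ B)
    (h : StrongEpi f) : Nonempty (RegularEpi f) := by
  obtain ⟨I', e, m, hfac, ⟨he⟩, hm⟩ := hreg.factor f
  haveI := he; haveI := hm
  haveI := h.llp m
  have sq : CommSq e f m (𝟙 B) := ⟨by simpa using hfac.symm⟩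
  haveI : IsSplitEpi m := IsSplitEpi.mk' ⟨sq.lift, sq.fac_right⟩
  haveI : IsIso m := isIso_of_mono_of_isSplitEpi m
  refine ⟨⟨he.W, he.left, he.right, by rw [hfac, reassoc_of% he.w], ?_⟩⟩
  refine Cofork.IsColimit.mk _
    (fun s => inv m ≫ Cofork.IsColimit.desc he.isColimit s.π s.condition)
    (fun s => ?_) (fun s mm hmm => ?_)
  · have hp := Cofork.IsColimit.π_desc' he.isColimit s.π s.condition
    simp only [Cofork.π_ofπ] at hp ⊢
    calc f ≫ inv m ≫ Cofork.IsColimit.desc he.isColimit s.π s.condition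
        = (e ≫ m) ≫ inv m ≫ Cofork.IsColimit.desc he.isColimit s.π s.condition := by
          rw [← hfac]
      _ = e ≫ Cofork.IsColimit.desc he.isColimit s.π s.condition := by
          rw [Category.assoc, IsIso.hom_inv_id_assoc]
      _ = s.π := hp
  · have hp := Cofork.IsColimit.π_desc' he.isColimit s.π s.condition
    simp only [Cofork.π_ofπ] at hp hmm ⊢
    have hmd : m ≫ mm = Cofork.IsColimit.desc he.isColimit s.π s.condition := by
      apply Cofork.IsColimit.hom_ext he.isColimit
      simp only [Cofork.π_ofπ]
      rw [hp, ← Category.assoc, ← hfac, hmm]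
    rw [← hmd, IsIso.inv_hom_id_assoc]

/-- In a regular category, regular epimorphisms compose. -/
lemma nregEpi_comp (hreg : IsRegularCategory D) {A B C' : D} (f : A ⟶ B) (g : B ⟶ C')
    (hf : Nonempty (RegularEpi f)) (hg : Nonempty (RegularEpi g)) :
    Nonempty (RegularEpi (f ≫ g)) := by
  obtain ⟨hf⟩ := hf; obtain ⟨hg⟩ := hg
  haveI := isRegularEpi_of_regularEpi hf; haveI := isRegularEpi_of_regularEpi hg
  exact nregEpi_of_strongEpi hreg _ (strongEpi_comp f g)

/-- In a regular category, the second factor of a regular epimorphism is one. -/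
lemma nregEpi_cancel (hreg : IsRegularCategory D) {A B C' : D} (f : A ⟶ B) (g : B ⟶ C')
    (h : Nonempty (RegularEpi (f ≫ g))) : Nonempty (RegularEpi g) := by
  obtain ⟨h⟩ := h
  haveI := isRegularEpi_of_regularEpi h
  exact nregEpi_of_strongEpi hreg g (strongEpi_of_strongEpi f g)

/-- A regular epimorphism is the coequalizer of its kernel pair (existence part). -/
lemma regEpi_desc {A B R T : D} (f : A ⟶ B) (hf : RegularEpi f)
    {r₀ r₁ : R ⟶ A} (h : IsPullback r₀ r₁ f f) (t : A ⟶ T) (ht : r₀ ≫ t = r₁ ≫ t) :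
    ∃ s : B ⟶ T, f ≫ s = t := by
  have h0 := h.lift_fst hf.left hf.right hf.w
  have h1 := h.lift_snd hf.left hf.right hf.w
  have hw : hf.left ≫ t = hf.right ≫ t := by
    calc hf.left ≫ t = (h.lift hf.left hf.right hf.w ≫ r₀) ≫ t := by rw [h0]
      _ = (h.lift hf.left hf.right hf.w ≫ r₁) ≫ t := by
          rw [Category.assoc, Category.assoc, ht]
      _ = hf.right ≫ t := by rw [h1]
  exact ⟨Cofork.IsColimit.desc hf.isColimit t hw, by
    simpa using Cofork.IsColimit.π_desc' hf.isColimit t hw⟩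

/-- The key comparison lemma: given a commutative square over a pullback, a "relational
cover" of the kernel pair of the diagonal forces the comparison morphism to the pullback
to be a regular epimorphism. -/
lemma comparison_regEpi [HasFiniteLimits D] (hreg : IsRegularCategory D)
    {A B C' D' P K S : D} {f : A ⟶ B} {g : A ⟶ C'} {h : B ⟶ D'} {k : C' ⟶ D'}
    (hcomm : f ≫ h = g ≫ k)
    {p₁ : P ⟶ B} {p₂ : P ⟶ C'} (hP : IsPullback p₁ p₂ h k)
    {l : A ⟶ P} (hl₁ : l ≫ p₁ = f) (hl₂ : l ≫ p₂ = g)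
    (hf : Nonempty (RegularEpi f)) (hg : Nonempty (RegularEpi g))
    {a₀ z a₁ : K ⟶ A} (h₀ : a₀ ≫ f = z ≫ f) (h₁ : z ≫ g = a₁ ≫ g)
    {e : K ⟶ S} {c₀ c₁ : S ⟶ A} (he : Nonempty (RegularEpi e))
    (hec₀ : e ≫ c₀ = a₀) (hec₁ : e ≫ c₁ = a₁)
    (hcover : ∀ ⦃T : D⦄ (x y : T ⟶ A), x ≫ (f ≫ h) = y ≫ (f ≫ h) →
      ∃ w : T ⟶ S, w ≫ c₀ = x ∧ w ≫ c₁ = y) :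
    Nonempty (RegularEpi l) := by
  have hM : IsPullback (pullback.fst h (f ≫ h)) (pullback.snd h (f ≫ h)) h (f ≫ h) :=
    IsPullback.of_hasPullback _ _
  set mB := pullback.fst h (f ≫ h) with hmB
  set mA := pullback.snd h (f ≫ h) with hmA
  have hψcomm : mB ≫ h = (mA ≫ g) ≫ k := by
    rw [Category.assoc, ← hcomm, hM.w]
  set ψ : pullback h (f ≫ h) ⟶ P := hP.lift mB (mA ≫ g) hψcomm with hψ
  have hψ₁ : ψ ≫ p₁ = mB := hP.lift_fst _ _ _
  have hψ₂ : ψ ≫ p₂ = mA ≫ g := hP.lift_snd _ _ _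
  have s : IsPullback mA (ψ ≫ p₁) (g ≫ k) h := by
    rw [hψ₁, ← hcomm]; exact hM.flip
  have hψpb : IsPullback mA ψ g p₂ := IsPullback.of_bot s hψ₂.symm hP.flip
  have hψre : Nonempty (RegularEpi ψ) := hreg.stable mA ψ g p₂ hψpb hg
  have hD : IsPullback (pullback.fst f mB) (pullback.snd f mB) f mB :=
    IsPullback.of_hasPullback _ _
  set q₁ := pullback.fst f mB
  set q₂ := pullback.snd f mB
  have hq₂re : Nonempty (RegularEpi q₂) := hreg.stable q₁ q₂ f mB hD hf
  have hδ : IsPullback q₁ (q₂ ≫ mA) (f ≫ h) (f ≫ h) := hD.paste_vert hM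
  obtain ⟨σS, hw₀, hw₁⟩ := hcover q₁ (q₂ ≫ mA) hδ.w
  have hV : IsPullback (pullback.fst e σS) (pullback.snd e σS) e σS :=
    IsPullback.of_hasPullback _ _
  set vK := pullback.fst e σS
  set vD := pullback.snd e σS
  have hvDre : Nonempty (RegularEpi vD) := hreg.stable vK vD e σS hV he
  have hvq0 : vD ≫ q₁ = vK ≫ a₀ := by
    rw [← hw₀, ← Category.assoc, ← hV.w, Category.assoc, hec₀]
  have hvq1 : vD ≫ q₂ ≫ mA = vK ≫ a₁ := by
    rw [← hw₁, ← Category.assoc, ← hV.w, Category.assoc, hec₁]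
  have key : (vK ≫ z) ≫ l = vD ≫ q₂ ≫ ψ := by
    apply hP.hom_ext
    · calc ((vK ≫ z) ≫ l) ≫ p₁ = vK ≫ z ≫ f := by rw [Category.assoc, hl₁, Category.assoc]
        _ = vK ≫ a₀ ≫ f := by rw [h₀]
        _ = (vD ≫ q₁) ≫ f := by rw [← Category.assoc, ← hvq0, Category.assoc]
        _ = vD ≫ q₂ ≫ mB := by rw [Category.assoc, hD.w]
        _ = (vD ≫ q₂ ≫ ψ) ≫ p₁ := by
            simp only [Category.assoc, hψ₁]
    · calc ((vK ≫ z) ≫ l) ≫ p₂ = vK ≫ z ≫ g := by rw [Category.assoc, hl₂, Category.assoc]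
        _ = vK ≫ a₁ ≫ g := by rw [h₁]
        _ = (vD ≫ q₂ ≫ mA) ≫ g := by rw [← Category.assoc vK a₁ g, ← hvq1]
        _ = (vD ≫ q₂ ≫ ψ) ≫ p₂ := by
            simp only [Category.assoc, hψ₂]
  refine nregEpi_cancel hreg (vK ≫ z) l ?_
  rw [key]
  exact nregEpi_comp hreg vD (q₂ ≫ ψ) hvDre (nregEpi_comp hreg q₂ ψ hq₂re hψre)

/-- The relational composite construction in an exact Mal'tsev category: the composite
of the kernel pairs of `f` and `g` is an effective equivalence relation whose quotient
receives maps from both `B` and `C'`. -/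
lemma exists_relS (hreg : IsRegularCategory D)
    (hexact : ∀ ⦃A R : D⦄ (d₀ d₁ : R ⟶ A), IsEquivRel d₀ d₁ →
      ∃ (Q : D) (q : A ⟶ Q), IsPullback d₀ d₁ q q)
    (hmal : IsMaltsevCat D)
    {A B C' Rf Rg K : D} (f : A ⟶ B) (g : A ⟶ C') [HasBinaryProduct A A]
    (hf : Nonempty (RegularEpi f)) (hg : Nonempty (RegularEpi g))
    {ρf₀ ρf₁ : Rf ⟶ A} (hRf : IsPullback ρf₀ ρf₁ f f)
    {ρg₀ ρg₁ : Rg ⟶ A} (hRg : IsPullback ρg₀ ρg₁ g g)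
    {kF : K ⟶ Rf} {kH : K ⟶ Rg} (hK : IsPullback kF kH ρf₁ ρg₀) :
    ∃ (S : D) (e : K ⟶ S) (c₀ c₁ : S ⟶ A) (Q : D) (q : A ⟶ Q),
      Nonempty (RegularEpi e) ∧
      e ≫ c₀ = kF ≫ ρf₀ ∧ e ≫ c₁ = kH ≫ ρg₁ ∧
      IsPullback c₀ c₁ q q ∧ Nonempty (RegularEpi q) ∧
      (∃ t : C' ⟶ Q, g ≫ t = q ∧ Nonempty (RegularEpi t)) ∧
      (∃ b : B ⟶ Q, f ≫ b = q) := by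
  obtain ⟨S, e, m, hfac, heRE, hm⟩ := hreg.factor (prod.lift (kF ≫ ρf₀) (kH ≫ ρg₁))
  haveI := hm
  obtain ⟨c₀, hc₀⟩ : ∃ c₀, c₀ = m ≫ prod.fst := ⟨_, rfl⟩
  obtain ⟨c₁, hc₁⟩ : ∃ c₁, c₁ = m ≫ prod.snd := ⟨_, rfl⟩
  have hec₀ : e ≫ c₀ = kF ≫ ρf₀ := by
    rw [hc₀, ← Category.assoc, ← hfac, prod.lift_fst]
  have hec₁ : e ≫ c₁ = kH ≫ ρg₁ := by
    rw [hc₁, ← Category.assoc, ← hfac, prod.lift_snd]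
  obtain ⟨rK, hrKF, hrKH⟩ : ∃ r : A ⟶ K,
      r ≫ kF = hRf.lift (𝟙 A) (𝟙 A) rfl ∧ r ≫ kH = hRg.lift (𝟙 A) (𝟙 A) rfl :=
    ⟨hK.lift _ _ (by rw [hRf.lift_snd, hRg.lift_fst]), hK.lift_fst _ _ _, hK.lift_snd _ _ _⟩
  have hrefl : IsReflexiveRel c₀ c₁ := by
    constructor
    · intro T x y hx hy
      rw [← cancel_mono m]
      apply Limits.prod.hom_ext
      · rw [Category.assoc, Category.assoc, ← hc₀]; exact hx
      · rw [Category.assoc, Category.assoc, ← hc₁]; exact hy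
    · refine ⟨rK ≫ e, ?_, ?_⟩
      · calc (rK ≫ e) ≫ c₀ = rK ≫ e ≫ c₀ := Category.assoc _ _ _
          _ = rK ≫ kF ≫ ρf₀ := by rw [hec₀]
          _ = (rK ≫ kF) ≫ ρf₀ := (Category.assoc _ _ _).symm
          _ = 𝟙 A := by rw [hrKF, hRf.lift_fst]
      · calc (rK ≫ e) ≫ c₁ = rK ≫ e ≫ c₁ := Category.assoc _ _ _
          _ = rK ≫ kH ≫ ρg₁ := by rw [hec₁]
          _ = (rK ≫ kH) ≫ ρg₁ := (Category.assoc _ _ _).symm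
          _ = 𝟙 A := by rw [hrKH, hRg.lift_snd]
  obtain ⟨Q₀, q₀, hQ₀⟩ := hexact c₀ c₁ (hmal c₀ c₁ hrefl)
  obtain ⟨Q, q, mq, hfacq, hqRE, hmq⟩ := hreg.factor q₀
  haveI := hmq
  rw [hfacq] at hQ₀
  have hS : IsPullback c₀ c₁ q q := IsKernelPair.cancel_right_of_mono hQ₀
  have haq : (kF ≫ ρf₀) ≫ q = (kH ≫ ρg₁) ≫ q := by
    calc (kF ≫ ρf₀) ≫ q = (e ≫ c₀) ≫ q := by rw [hec₀]
      _ = (e ≫ c₁) ≫ q := by rw [Category.assoc, Category.assoc, hS.w]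
      _ = (kH ≫ ρg₁) ≫ q := by rw [hec₁]
  obtain ⟨jg, hjgF, hjgH⟩ : ∃ jg : Rg ⟶ K,
      jg ≫ kF = hRf.lift ρg₀ ρg₀ rfl ∧ jg ≫ kH = 𝟙 Rg :=
    ⟨hK.lift _ _ (by rw [hRf.lift_snd, Category.id_comp]), hK.lift_fst _ _ _,
      hK.lift_snd _ _ _⟩
  have hjg : ρg₀ ≫ q = ρg₁ ≫ q := by
    calc ρg₀ ≫ q = jg ≫ (kF ≫ ρf₀) ≫ q := by
          rw [← Category.assoc, ← Category.assoc, hjgF, hRf.lift_fst]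
      _ = jg ≫ (kH ≫ ρg₁) ≫ q := by rw [haq]
      _ = ρg₁ ≫ q := by rw [← Category.assoc, ← Category.assoc, hjgH, Category.id_comp]
  obtain ⟨hgRE⟩ := hg
  obtain ⟨t, ht⟩ := regEpi_desc g hgRE hRg q hjg
  have htRE : Nonempty (RegularEpi t) := nregEpi_cancel hreg g t (by rw [ht]; exact hqRE)
  obtain ⟨jf, hjfF, hjfH⟩ : ∃ jf : Rf ⟶ K,
      jf ≫ kF = 𝟙 Rf ∧ jf ≫ kH = hRg.lift ρf₁ ρf₁ rfl :=
    ⟨hK.lift _ _ (by rw [hRg.lift_fst, Category.id_comp]), hK.lift_fst _ _ _,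
      hK.lift_snd _ _ _⟩
  have hjf : ρf₀ ≫ q = ρf₁ ≫ q := by
    calc ρf₀ ≫ q = jf ≫ (kF ≫ ρf₀) ≫ q := by
          rw [← Category.assoc, ← Category.assoc, hjfF, Category.id_comp]
      _ = jf ≫ (kH ≫ ρg₁) ≫ q := by rw [haq]
      _ = ρf₁ ≫ q := by rw [← Category.assoc, ← Category.assoc, hjfH, hRg.lift_snd]
  obtain ⟨hfRE⟩ := hf
  obtain ⟨b, hb⟩ := regEpi_desc f hfRE hRf q hjf
  exact ⟨S, e, c₀, c₁, Q, q, heRE, hec₀, hec₁, hS, hqRE, ⟨t, ht, htRE⟩, ⟨b, hb⟩⟩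

/-- For a Birkhoff subcategory of a regular category, each component of the unit is a
regular epimorphism. -/
lemma unit_nregEpi {X : Type u'} [Category.{v'} X] (hreg : IsRegularCategory D)
    (H : X ⥤ D) (I : D ⥤ X) (adj : I ⊣ H) (hbirk : IsBirkhoff H I adj) (A : D) :
    Nonempty (RegularEpi (adj.unit.app A)) := by
  haveI := hbirk.full
  haveI := hbirk.faithful
  obtain ⟨I', e, m, hfac, ⟨he⟩, hm⟩ := hreg.factor (adj.unit.app A)
  haveI := isRegularEpi_of_regularEpi he; haveI := hm
  obtain ⟨y, ⟨φ⟩⟩ := hbirk.closedSub (I.obj A) I' m hm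
  have hum : adj.unit.app A ≫ H.map ((adj.homEquiv A y).symm (e ≫ φ.hom)) = e ≫ φ.hom := by
    have h := (adj.homEquiv A y).apply_symm_apply (e ≫ φ.hom)
    rwa [Adjunction.homEquiv_unit] at h
  obtain ⟨w, hw⟩ := H.map_surjective
    (H.map ((adj.homEquiv A y).symm (e ≫ φ.hom)) ≫ φ.inv ≫ m)
  have hwid : w = 𝟙 (I.obj A) := by
    apply (adj.homEquiv A (I.obj A)).injective
    have h1 : (adj.homEquiv A (I.obj A)) w = adj.unit.app A := by
      rw [Adjunction.homEquiv_unit, hw, ← Category.assoc, hum, hfac]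
      simp
    have h2 : (adj.homEquiv A (I.obj A)) (𝟙 _) = adj.unit.app A := by
      rw [Adjunction.homEquiv_unit, H.map_id]
      exact Category.comp_id _
    rw [h1, h2]
  have hsec : (H.map ((adj.homEquiv A y).symm (e ≫ φ.hom)) ≫ φ.inv) ≫ m = 𝟙 _ := by
    rw [Category.assoc, ← hw, hwid, H.map_id]
  haveI : IsSplitEpi m := IsSplitEpi.mk' ⟨_, hsec⟩
  haveI : IsIso m := isIso_of_mono_of_isSplitEpi m
  rw [hfac]
  exact nregEpi_of_strongEpi hreg _ (strongEpi_comp e m)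

end AuxiliaryLemmas

/-- If `C` is Barr-exact Mal'tsev and `X` is a Birkhoff subcategory,
then `X` is strongly `E`-Birkhoff (`E` = regular epimorphisms): for every regular
epimorphism `f : A ⟶ B`, the `η`-naturality square at `f` is a double extension. -/
theorem statement_10 {C : Type u} [Category.{v} C] [HasFiniteLimits C]
    {X : Type u'} [Category.{v'} X]
    (hex : IsBarrExact C) (hmal : IsMaltsevCat C)
    (H : X ⥤ C) (I : C ⥤ X) (adj : I ⊣ H) (hbirk : IsBirkhoff H I adj)
    {A B : C} (f : A ⟶ B) (hf : Nonempty (RegularEpi f)) :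
    InE1 (regEpi C)
      (Arrow.homMk (f := Arrow.mk f) (g := Arrow.mk (H.map (I.map f)))
        (u := adj.unit.app A) (v := adj.unit.app B) (by simp)) := by
  obtain ⟨hregC, hexact⟩ := hex
  haveI := hbirk.full
  haveI := hbirk.faithful
  have hnat : f ≫ adj.unit.app B = adj.unit.app A ≫ H.map (I.map f) := by
    exact adj.unit.naturality f
  have hηA := unit_nregEpi hregC H I adj hbirk A
  have hηB := unit_nregEpi hregC H I adj hbirk B
  have hHf : Nonempty (RegularEpi (H.map (I.map f))) := by
    refine nregEpi_cancel hregC (adj.unit.app A) _ ?_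
    rw [← hnat]
    exact nregEpi_comp hregC f _ hf hηB
  have hP : IsPullback (pullback.fst (adj.unit.app B) (H.map (I.map f)))
      (pullback.snd (adj.unit.app B) (H.map (I.map f)))
      (adj.unit.app B) (H.map (I.map f)) := IsPullback.of_hasPullback _ _
  refine ⟨hf, hHf, hηA, hηB, _, _, _, hP.lift f (adj.unit.app A) hnat, hP,
    hP.lift_fst _ _ _, hP.lift_snd _ _ _, ?_⟩
  -- it remains to show that the comparison morphism is a regular epimorphism
  have hRf : IsPullback (pullback.fst f f) (pullback.snd f f) f f :=
    IsPullback.of_hasPullback f f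
  have hRg : IsPullback (pullback.fst (adj.unit.app A) (adj.unit.app A))
      (pullback.snd (adj.unit.app A) (adj.unit.app A))
      (adj.unit.app A) (adj.unit.app A) := IsPullback.of_hasPullback _ _
  have hK : IsPullback
      (pullback.fst (pullback.snd f f) (pullback.fst (adj.unit.app A) (adj.unit.app A)))
      (pullback.snd (pullback.snd f f) (pullback.fst (adj.unit.app A) (adj.unit.app A)))
      (pullback.snd f f) (pullback.fst (adj.unit.app A) (adj.unit.app A)) :=
    IsPullback.of_hasPullback _ _
  obtain ⟨S, e, c₀, c₁, Q, q, heRE, hec₀, hec₁, hS, hqRE, ⟨t, ht, htRE⟩, ⟨b, hb⟩⟩ :=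
    exists_relS hregC hexact hmal f (adj.unit.app A) hf hηA hRf hRg hK
  -- Birkhoff: `Q` is isomorphic to an object of `X`, being a regular quotient of `H (I A)`
  obtain ⟨y, ⟨φ⟩⟩ := hbirk.closedQuot (I.obj A) Q t htRE
  -- hence `b : B ⟶ Q` factors through the unit at `B`
  have hn : adj.unit.app B ≫ (H.map ((adj.homEquiv B y).symm (b ≫ φ.hom)) ≫ φ.inv) = b := by
    have h := (adj.homEquiv B y).apply_symm_apply (b ≫ φ.hom)
    rw [Adjunction.homEquiv_unit] at h
    rw [← Category.assoc, h, Category.assoc, φ.hom_inv_id, Category.comp_id]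
  -- therefore the kernel pair of `f ≫ η_B` is contained in `S`
  have hcover : ∀ ⦃T : C⦄ (x y' : T ⟶ A),
      x ≫ (f ≫ adj.unit.app B) = y' ≫ (f ≫ adj.unit.app B) →
      ∃ w : T ⟶ S, w ≫ c₀ = x ∧ w ≫ c₁ = y' := by
    intro T x y' hxy
    have hqd : (f ≫ adj.unit.app B) ≫
        (H.map ((adj.homEquiv B y).symm (b ≫ φ.hom)) ≫ φ.inv) = q := by
      rw [Category.assoc, hn, hb]
    have hq : x ≫ q = y' ≫ q := by
      calc x ≫ q
          = x ≫ (f ≫ adj.unit.app B) ≫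
              (H.map ((adj.homEquiv B y).symm (b ≫ φ.hom)) ≫ φ.inv) := by rw [hqd]
        _ = (x ≫ (f ≫ adj.unit.app B)) ≫
              (H.map ((adj.homEquiv B y).symm (b ≫ φ.hom)) ≫ φ.inv) :=
            (Category.assoc _ _ _).symm
        _ = (y' ≫ (f ≫ adj.unit.app B)) ≫
              (H.map ((adj.homEquiv B y).symm (b ≫ φ.hom)) ≫ φ.inv) := by rw [hxy]
        _ = y' ≫ (f ≫ adj.unit.app B) ≫
              (H.map ((adj.homEquiv B y).symm (b ≫ φ.hom)) ≫ φ.inv) :=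
            Category.assoc _ _ _
        _ = y' ≫ q := by rw [hqd]
    exact ⟨hS.lift x y' hq, hS.lift_fst _ _ _, hS.lift_snd _ _ _⟩
  have h₀ : (pullback.fst (pullback.snd f f)
        (pullback.fst (adj.unit.app A) (adj.unit.app A)) ≫ pullback.fst f f) ≫ f =
      (pullback.fst (pullback.snd f f)
        (pullback.fst (adj.unit.app A) (adj.unit.app A)) ≫ pullback.snd f f) ≫ f := by
    rw [Category.assoc, Category.assoc, hRf.w]
  have h₁ : (pullback.fst (pullback.snd f f)
        (pullback.fst (adj.unit.app A) (adj.unit.app A)) ≫ pullback.snd f f) ≫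
        adj.unit.app A =
      (pullback.snd (pullback.snd f f)
        (pullback.fst (adj.unit.app A) (adj.unit.app A)) ≫
        pullback.snd (adj.unit.app A) (adj.unit.app A)) ≫ adj.unit.app A := by
    calc (pullback.fst (pullback.snd f f)
            (pullback.fst (adj.unit.app A) (adj.unit.app A)) ≫ pullback.snd f f) ≫
            adj.unit.app A
        = (pullback.snd (pullback.snd f f)
            (pullback.fst (adj.unit.app A) (adj.unit.app A)) ≫
            pullback.fst (adj.unit.app A) (adj.unit.app A)) ≫ adj.unit.app A := by
          rw [hK.w]
      _ = (pullback.snd (pullback.snd f f)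
            (pullback.fst (adj.unit.app A) (adj.unit.app A)) ≫
            pullback.snd (adj.unit.app A) (adj.unit.app A)) ≫ adj.unit.app A := by
          rw [Category.assoc, Category.assoc, hRg.w]
  exact comparison_regEpi hregC hnat hP (hP.lift_fst _ _ _) (hP.lift_snd _ _ _)
    hf hηA h₀ h₁ heRE hec₀ hec₁ hcover

end GaloisPaper
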